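/- Let h : ℝ → ℝ be continuously differentiable and suppose h'(t) ≥ -γ(h(t)) for all t ≥ t₀, where γ is a locally Lipschitz extended class-K function (strictly increasing with γ(0) = 0). If h(t₀) ≥ 0, then h(t) ≥ 0 for all t ≥ t₀. -/

import Mathlib

/-- Comparison lemma / forward invariance of `{h ≥ 0}` for a zeroing barrier function. -/
theorem stmt_5 (h : ℝ → ℝ) (hC1 : ContDiff ℝ 1 h)
    (γ : ℝ → ℝ) (hγlip : LocallyLipschitz γ) (hγmono : StrictMono γ) (hγ0 : γ 0 = 0)
    (t₀ : ℝ) (hineq : ∀ t, t₀ ≤ t → deriv h t ≥ -γ (h t))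
    (h0 : 0 ≤ h t₀) :
    ∀ t, t₀ ≤ t → 0 ≤ h t := by
  have hcont : Continuous h := hC1.continuous
  have hdiff : Differentiable ℝ h := hC1.differentiable one_ne_zero
  intro t1 ht1
  by_contra hneg
  push_neg at hneg
  -- set of zeros of h in [t₀, t1]
  set S : Set ℝ := {t | t ∈ Set.Icc t₀ t1 ∧ h t = 0} with hS
  have hSne : S.Nonempty := by
    have h0mem : (0 : ℝ) ∈ Set.Icc (h t1) (h t₀) := ⟨hneg.le, h0⟩
    have := intermediate_value_Icc' ht1 hcont.continuousOn h0mem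
    obtain ⟨c, hc, hc0⟩ := this
    exact ⟨c, hc, hc0⟩
  have hSbdd : BddAbove S := ⟨t1, fun x hx => hx.1.2⟩
  have hSclosed : IsClosed S := by
    have : S = Set.Icc t₀ t1 ∩ h ⁻¹' {0} := by
      ext x; simp [hS, Set.mem_Icc]
    rw [this]
    exact isClosed_Icc.inter (isClosed_singleton.preimage hcont)
  set s := sSup S with hs
  have hsmem : s ∈ S := hSclosed.csSup_mem hSne hSbdd
  have hst0 : t₀ ≤ s := hsmem.1.1
  have hst1 : s ≤ t1 := hsmem.1.2
  have hs0 : h s = 0 := hsmem.2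
  -- h ≤ 0 on [s, t1]
  have hle : ∀ t ∈ Set.Icc s t1, h t ≤ 0 := by
    intro t ht
    rcases eq_or_lt_of_le ht.1 with rfl | hst
    · exact hs0.le
    by_contra hpos
    push_neg at hpos
    have h0mem : (0 : ℝ) ∈ Set.Icc (h t1) (h t) := ⟨hneg.le, hpos.le⟩
    obtain ⟨c, hc, hc0⟩ := intermediate_value_Icc' ht.2 hcont.continuousOn h0mem
    have hcS : c ∈ S := ⟨⟨hst0.trans (ht.1.trans hc.1), hc.2⟩, hc0⟩
    have : c ≤ s := le_csSup hSbdd hcS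
    exact absurd (lt_of_lt_of_le hst (hc.1)) (not_lt.mpr this)
  -- h is monotone on [s, t1] since deriv h ≥ 0 there
  have hmono : MonotoneOn h (Set.Icc s t1) := by
    apply monotoneOn_of_deriv_nonneg (convex_Icc s t1) hcont.continuousOn
      (hdiff.differentiableOn)
    intro x hx
    rw [interior_Icc] at hx
    have hx' : x ∈ Set.Icc s t1 := ⟨hx.1.le, hx.2.le⟩
    have h1 : deriv h x ≥ -γ (h x) := hineq x (hst0.trans hx.1.le)
    have h2 : γ (h x) ≤ 0 := by
      calc γ (h x) ≤ γ 0 := hγmono.monotone (hle x hx')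
      _ = 0 := hγ0
    linarith
  have : h s ≤ h t1 := hmono ⟨le_rfl, hst1⟩ ⟨hst1, le_rfl⟩ hst1
  rw [hs0] at this
  exact absurd (lt_of_le_of_lt this hneg) (lt_irrefl 0)
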